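/- With w_k(m) defined by w_0 = 0 and w_{k+1}^2(m) = w_k^2(m) + (Σ_{l=1}^{m-1} (m-l)/(l^2 - w_k^2(m)))^{-1}, one has w_k^2(m+1) < w_k^2(m) for all m ≥ 3 and k ≥ 1. -/

import Mathlib

open Finset

noncomputable def Fw (m : ℕ) (s : ℝ) : ℝ :=
  ∑ l ∈ Finset.Ico 1 m, ((m : ℝ) - l) / ((l : ℝ) ^ 2 - s)

lemma term_pos {m l : ℕ} {s : ℝ} (hl : l ∈ Finset.Ico 1 m) (hs : s < 1) :
    0 < ((m : ℝ) - l) / ((l : ℝ) ^ 2 - s) := by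
  simp only [Finset.mem_Ico] at hl
  have h1 : (1 : ℝ) ≤ (l : ℝ) := by exact_mod_cast hl.1
  have h2 : (l : ℝ) < m := by exact_mod_cast hl.2
  have : (1 : ℝ) ≤ (l : ℝ) ^ 2 := by nlinarith
  apply div_pos <;> linarith

lemma denom_pos {l : ℕ} {s : ℝ} (hl : 1 ≤ l) (hs : s < 1) :
    0 < (l : ℝ) ^ 2 - s := by
  have h1 : (1 : ℝ) ≤ (l : ℝ) := by exact_mod_cast hl
  nlinarith

lemma F_lower {m : ℕ} {s : ℝ} (hm : 3 ≤ m) (hs : s < 1) :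
    2 / (1 - s) ≤ Fw m s := by
  have h1 : (1 : ℕ) ∈ Finset.Ico 1 m := by simp; omega
  have := Finset.single_le_sum (f := fun l : ℕ => ((m : ℝ) - l) / ((l : ℝ) ^ 2 - s))
    (fun l hl => (term_pos hl hs).le) h1
  have hm' : (3 : ℝ) ≤ (m : ℝ) := by exact_mod_cast hm
  have hF : ((m : ℝ) - 1) / ((1 : ℝ) ^ 2 - s) ≤ Fw m s := by simpa [Fw] using this
  have h2 : 2 / (1 - s) ≤ ((m : ℝ) - 1) / ((1:ℝ)^2 - s) := by
    rw [one_pow]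
    gcongr <;> linarith
  linarith

lemma F_pos {m : ℕ} {s : ℝ} (hm : 3 ≤ m) (hs : s < 1) : 0 < Fw m s := by
  have h : (0:ℝ) < 2 / (1 - s) := div_pos two_pos (by linarith)
  linarith [F_lower hm hs]

lemma F_mono_m {m : ℕ} {s : ℝ} (hm : 3 ≤ m) (hs : s < 1) :
    Fw m s < Fw (m + 1) s := by
  have hrw : Fw (m+1) s = (∑ l ∈ Finset.Ico 1 m, (((m:ℝ)+1) - l) / ((l : ℝ) ^ 2 - s))
      + (((m:ℝ)+1) - m) / ((m : ℝ) ^ 2 - s) := by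
    unfold Fw
    rw [Finset.sum_Ico_succ_top (by omega)]
    push_cast
    rfl
  have hlast : 0 < (((m:ℝ)+1) - m) / ((m : ℝ) ^ 2 - s) := by
    have := denom_pos (l := m) (by omega) hs
    apply div_pos (by linarith) this
  have hstep : Fw m s < ∑ l ∈ Finset.Ico 1 m, (((m:ℝ)+1) - l) / ((l : ℝ) ^ 2 - s) := by
    unfold Fw
    apply Finset.sum_lt_sum_of_nonempty ⟨1, by simp; omega⟩
    intro l hl
    simp only [Finset.mem_Ico] at hl
    have hd := denom_pos (l := l) hl.1 hs
    gcongr <;> linarith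
  linarith

lemma F_mono_s {m : ℕ} {s s' : ℝ} (hm : 3 ≤ m) (hss : s ≤ s') (hs' : s' < 1) :
    Fw m s ≤ Fw m s' := by
  apply Finset.sum_le_sum
  intro l hl
  simp only [Finset.mem_Ico] at hl
  have hd := denom_pos (l := l) hl.1 (lt_of_le_of_lt hss hs')
  have hd' := denom_pos (l := l) hl.1 hs'
  have hml : (l:ℝ) < m := by exact_mod_cast hl.2
  apply div_le_div_of_nonneg_left (by linarith) hd' (by linarith)

lemma g_mono {m : ℕ} {s s' : ℝ} (hm : 3 ≤ m) (h0 : 0 ≤ s) (hss : s < s') (hs1 : s' < 1) :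
    s + (Fw m s)⁻¹ < s' + (Fw m s')⁻¹ := by
  have hs : s < 1 := lt_trans hss hs1
  have hA : 0 < Fw m s := F_pos hm hs
  have hB : 0 < Fw m s' := F_pos hm hs1
  set A := Fw m s with hAdef
  set B := Fw m s' with hBdef
  -- difference formula
  have hBA : B - A = ∑ l ∈ Finset.Ico 1 m,
      ((m:ℝ) - l) * (s' - s) / (((l:ℝ)^2 - s) * ((l:ℝ)^2 - s')) := by
    rw [hAdef, hBdef]
    unfold Fw
    rw [← Finset.sum_sub_distrib]
    apply Finset.sum_congr rfl
    intro l hl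
    simp only [Finset.mem_Ico] at hl
    have hd := denom_pos (l := l) hl.1 hs
    have hd' := denom_pos (l := l) hl.1 hs1
    field_simp
    ring
  have hkey : B - A < (s' - s) * (A * B) := by
    rw [hBA]
    have hrhs : (s' - s) * (A * B) = ∑ l ∈ Finset.Ico 1 m,
        ((m:ℝ) - l) / ((l:ℝ)^2 - s) * ((s' - s) * B) := by
      rw [← Finset.sum_mul, hAdef]; unfold Fw; ring
    rw [hrhs]
    apply Finset.sum_lt_sum
    · intro l hl
      simp only [Finset.mem_Ico] at hl
      have hd := denom_pos (l := l) hl.1 hs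
      have hd' := denom_pos (l := l) hl.1 hs1
      have hml : (l:ℝ) < m := by exact_mod_cast hl.2
      have hml1 : ((l:ℝ) + 1) ≤ (m:ℝ) := by exact_mod_cast hl.2
      have hb : ((m:ℝ) - l) / ((l:ℝ)^2 - s') ≤ B := by
        rw [hBdef]
        exact Finset.single_le_sum (f := fun l : ℕ => ((m : ℝ) - l) / ((l : ℝ) ^ 2 - s'))
          (fun j hj => (term_pos hj hs1).le) (by simp; omega)
      have h1 : (s' - s) / ((l:ℝ)^2 - s') ≤ (s' - s) * B := by
        have h2 : 1 / ((l:ℝ)^2 - s') ≤ ((m:ℝ) - l) / ((l:ℝ)^2 - s') := by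
          gcongr; linarith
        have h3 : 1 / ((l:ℝ)^2 - s') ≤ B := le_trans h2 hb
        calc (s' - s) / ((l:ℝ)^2 - s') = (s' - s) * (1 / ((l:ℝ)^2 - s')) := by ring
          _ ≤ (s' - s) * B := by gcongr
      calc ((m:ℝ) - l) * (s' - s) / (((l:ℝ)^2 - s) * ((l:ℝ)^2 - s'))
          = ((m:ℝ) - l) / ((l:ℝ)^2 - s) * ((s' - s) / ((l:ℝ)^2 - s')) := by
            rw [div_mul_div_comm]
        _ ≤ ((m:ℝ) - l) / ((l:ℝ)^2 - s) * ((s' - s) * B) := by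
            exact mul_le_mul_of_nonneg_left h1 (div_nonneg (by linarith) hd.le)
    · refine ⟨1, by simp; omega, ?_⟩
      have hd : (0:ℝ) < ((1:ℕ):ℝ)^2 - s := denom_pos le_rfl hs
      have hd' : (0:ℝ) < ((1:ℕ):ℝ)^2 - s' := denom_pos le_rfl hs1
      have hm' : (3:ℝ) ≤ (m:ℝ) := by exact_mod_cast hm
      have hBlow : 2 / (1 - s') ≤ B := F_lower hm hs1
      have h1 : (s' - s) / (((1:ℕ):ℝ)^2 - s') < (s' - s) * B := by
        have : (s' - s) / (1 - s') < (s' - s) * (2 / (1 - s')) := by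
          have hx : (0:ℝ) < (s' - s) / (1 - s') := div_pos (by linarith) (by linarith)
          have heq : (s' - s) * (2 / (1 - s')) = 2 * ((s' - s) / (1 - s')) := by ring
          rw [heq]; linarith
        have h2 : (s' - s) * (2 / (1 - s')) ≤ (s' - s) * B := by gcongr
        calc (s' - s) / (((1:ℕ):ℝ)^2 - s') = (s' - s) / (1 - s') := by norm_num
          _ < (s' - s) * (2 / (1 - s')) := this
          _ ≤ (s' - s) * B := h2
      calc ((m:ℝ) - (1:ℕ)) * (s' - s) / ((((1:ℕ):ℝ)^2 - s) * (((1:ℕ):ℝ)^2 - s'))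
          = ((m:ℝ) - (1:ℕ)) / (((1:ℕ):ℝ)^2 - s) * ((s' - s) / (((1:ℕ):ℝ)^2 - s')) := by
            rw [div_mul_div_comm]
        _ < ((m:ℝ) - (1:ℕ)) / (((1:ℕ):ℝ)^2 - s) * ((s' - s) * B) := by
            apply mul_lt_mul_of_pos_left h1
            apply div_pos (by push_cast; linarith) hd
  have hinv : A⁻¹ - B⁻¹ < s' - s := by
    rw [inv_sub_inv hA.ne' hB.ne', div_lt_iff₀ (by positivity)]
    linarith [hkey]
  linarith

lemma Finv_lt {m : ℕ} {s : ℝ} (hm : 3 ≤ m) (h0 : 0 ≤ s) (hs : s < 1) :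
    (Fw m s)⁻¹ < 1 - s := by
  have hFl := F_lower hm hs
  have h2 : (0:ℝ) < 2 / (1 - s) := div_pos two_pos (by linarith)
  have := inv_anti₀ h2 hFl
  have heq : (2 / (1 - s))⁻¹ = (1 - s) / 2 := by
    rw [inv_div]
  rw [heq] at this
  linarith

theorem stmt_16 (w : ℕ → ℕ → ℝ) (hw0 : ∀ m, 3 ≤ m → w m 0 = 0)
    (hrec : ∀ m, 3 ≤ m → ∀ k, (w m (k + 1)) ^ 2 = (w m k) ^ 2 +
      (∑ l ∈ Finset.Ico 1 m, ((m : ℝ) - l) / ((l : ℝ) ^ 2 - (w m k) ^ 2))⁻¹) :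
    ∀ m, 3 ≤ m → ∀ k, 1 ≤ k → (w (m + 1) k) ^ 2 < (w m k) ^ 2 := by
  have hrec' : ∀ m, 3 ≤ m → ∀ k,
      (w m (k + 1)) ^ 2 = (w m k) ^ 2 + (Fw m ((w m k) ^ 2))⁻¹ := hrec
  have hbound : ∀ m, 3 ≤ m → ∀ k, 0 ≤ (w m k) ^ 2 ∧ (w m k) ^ 2 < 1 := by
    intro m hm k
    induction k with
    | zero => rw [hw0 m hm]; norm_num
    | succ k ih =>
      rw [hrec' m hm k]
      have hFpos := F_pos hm ih.2
      have hFi : (0:ℝ) < (Fw m ((w m k) ^ 2))⁻¹ := inv_pos.mpr hFpos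
      have hup := Finv_lt hm ih.1 ih.2
      constructor <;> linarith
  intro m hm k hk
  induction k with
  | zero => omega
  | succ k ih =>
    have hm1 : 3 ≤ m + 1 := by omega
    rcases Nat.eq_zero_or_pos k with h0 | hpos
    · subst h0
      have e1 := hrec' (m + 1) hm1 0
      have e2 := hrec' m hm 0
      rw [hw0 (m + 1) hm1] at e1
      rw [hw0 m hm] at e2
      norm_num at e1 e2
      rw [e1, e2]
      exact inv_strictAnti₀ (F_pos hm one_pos) (F_mono_m hm one_pos)
    · have ihk := ih hpos
      have hb1 := hbound (m + 1) hm1 k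
      have hb2 := hbound m hm k
      rw [hrec' (m + 1) hm1 k, hrec' m hm k]
      calc (w (m+1) k) ^ 2 + (Fw (m + 1) ((w (m+1) k) ^ 2))⁻¹
          < (w (m+1) k) ^ 2 + (Fw m ((w (m+1) k) ^ 2))⁻¹ := by
            have := inv_strictAnti₀ (F_pos hm hb1.2) (F_mono_m hm hb1.2)
            linarith
        _ < (w m k) ^ 2 + (Fw m ((w m k) ^ 2))⁻¹ := g_mono hm hb1.1 ihk hb2.2
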